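/- Molecules form a bounded subset of H¹_z(X): for every α > 0 there is a constant C, depending only on α and the doubling constant C_D, such that every molecule m with parameter α associated to a ball Q ⊆ X belongs to H¹_z(X) with ‖m‖_{H¹_z(X)} ≤ C. -/

import Mathlib

open MeasureTheory Metric Filter Set
open scoped ENNReal NNReal

noncomputable section

/-- The parabolic quasi-distance on `ℝ × E`. -/
def pdist {E : Type*} [MetricSpace E] (p q : ℝ × E) : ℝ :=
  max (Real.sqrt |p.1 - q.1|) (dist p.2 q.2)

/-- The open parabolic ball in `N = ℝ × E`. -/
def pball {E : Type*} [MetricSpace E] (c : ℝ × E) (r : ℝ) : Set (ℝ × E) :=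
  {p | pdist p c < r}

/-- The upper half space `X = (0,∞) × E` of `N = ℝ × E`. -/
def Xset (E : Type*) : Set (ℝ × E) := {p | 0 < p.1}

/-- The product measure `ν = Lebesgue ⊗ μ` on `N = ℝ × E`. -/
def pmeas {E : Type*} [MeasurableSpace E] (μ : Measure E) : Measure (ℝ × E) :=
  (volume : Measure ℝ).prod μ

/-- A `(1,2)`-atom on `N`: supported in a parabolic ball `Q`, mean value zero, and
`‖a‖_{L²(ν)} ≤ ν(Q)^{-1/2}`. -/
def IsAtom12 {E : Type*} [MetricSpace E] [MeasurableSpace E]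
    (μ : Measure E) (a : ℝ × E → ℝ) : Prop :=
  ∃ (c : ℝ × E) (r : ℝ), 0 < r ∧ Function.support a ⊆ pball c r ∧
    Integrable a (pmeas μ) ∧ (∫ p, a p ∂(pmeas μ)) = 0 ∧
    eLpNorm a 2 (pmeas μ) ≤ (pmeas μ (pball c r)) ^ (-(1:ℝ)/2)

/-- `f = Σ λ_i a_i` with convergence in `L¹(ρ)`. -/
def HasL1Decomp {E : Type*} [MeasurableSpace E] (ρ : Measure (ℝ × E))
    (f : ℝ × E → ℝ) (lam : ℕ → ℝ) (a : ℕ → ℝ × E → ℝ) : Prop :=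
  Summable (fun i => |lam i|) ∧
  Tendsto (fun k => eLpNorm (fun p => f p - ∑ i ∈ Finset.range k, lam i * a i p) 1 ρ)
    atTop (nhds 0)

/-- Membership in the atomic Hardy space `H¹(N)`. -/
def MemH1 {E : Type*} [MetricSpace E] [MeasurableSpace E]
    (μ : Measure E) (f : ℝ × E → ℝ) : Prop :=
  Integrable f (pmeas μ) ∧
  ∃ (lam : ℕ → ℝ) (a : ℕ → ℝ × E → ℝ), (∀ i, IsAtom12 μ (a i)) ∧
    HasL1Decomp (pmeas μ) f lam a

/-- The `H¹(N)` norm: infimum of `Σ |λ_i|` over all atomic decompositions. -/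
def H1norm {E : Type*} [MetricSpace E] [MeasurableSpace E]
    (μ : Measure E) (f : ℝ × E → ℝ) : ℝ :=
  sInf {c | ∃ (lam : ℕ → ℝ) (a : ℕ → ℝ × E → ℝ), (∀ i, IsAtom12 μ (a i)) ∧
    HasL1Decomp (pmeas μ) f lam a ∧ c = ∑' i, |lam i|}

/-- Membership in `H¹_r(X)`: `f ∈ L¹(X,ν)` is the restriction to `X` of some `F ∈ H¹(N)`. -/
def MemH1r {E : Type*} [MetricSpace E] [MeasurableSpace E]
    (μ : Measure E) (f : ℝ × E → ℝ) : Prop :=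
  IntegrableOn f (Xset E) (pmeas μ) ∧
  ∃ F : ℝ × E → ℝ, MemH1 μ F ∧ F =ᵐ[(pmeas μ).restrict (Xset E)] f

/-- The quotient norm on `H¹_r(X)`. -/
def H1rnorm {E : Type*} [MetricSpace E] [MeasurableSpace E]
    (μ : Measure E) (f : ℝ × E → ℝ) : ℝ :=
  sInf {c | ∃ F : ℝ × E → ℝ, MemH1 μ F ∧ F =ᵐ[(pmeas μ).restrict (Xset E)] f ∧
    c = H1norm μ F}

/-- Membership in `H¹_z(X)`: the extension of `f` by zero belongs to `H¹(N)`. -/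
def MemH1z {E : Type*} [MetricSpace E] [MeasurableSpace E]
    (μ : Measure E) (f : ℝ × E → ℝ) : Prop :=
  IntegrableOn f (Xset E) (pmeas μ) ∧ MemH1 μ ((Xset E).indicator f)

/-- The `H¹_z(X)` norm: the `H¹(N)` norm of the zero extension. -/
def H1znorm {E : Type*} [MetricSpace E] [MeasurableSpace E]
    (μ : Measure E) (f : ℝ × E → ℝ) : ℝ :=
  H1norm μ ((Xset E).indicator f)

/-- `μ` is doubling with constant `C_D`, with all balls of positive finite measure. -/
def DoublingWith {E : Type*} [MetricSpace E] [MeasurableSpace E]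
    (μ : Measure E) (C_D : ℝ) : Prop :=
  (∀ (x : E) (r : ℝ), 0 < r → 0 < μ (ball x r) ∧ μ (ball x r) < ⊤) ∧
  (∀ (x : E) (r : ℝ), 0 < r → μ (ball x (2 * r)) ≤ ENNReal.ofReal C_D * μ (ball x r))

/-- The annular regions `B_j(Q)` attached to a parabolic ball `Q = pball c r`:
`B_1(Q) = 4Q ∩ X` and `B_j(Q) = (2^{j+1}Q ∖ 2^jQ) ∩ X` for `j ≥ 2`. -/
def molBall {E : Type*} [MetricSpace E] (c : ℝ × E) (r : ℝ) (j : ℕ) : Set (ℝ × E) :=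
  if j = 1 then pball c (4 * r) ∩ Xset E
  else (pball c (2 ^ (j + 1) * r) \ pball c (2 ^ j * r)) ∩ Xset E

/-- A molecule with parameter `α` associated to a ball `Q = pball c r ⊆ X`:
`∫_X m dν = 0` and `‖m‖_{L²(B_j(Q))} ≤ 2^{−jα} ν(2^{j+1}Q ∩ X)^{−1/2}` for all `j ≥ 1`. -/
def IsMolecule {E : Type*} [MetricSpace E] [MeasurableSpace E]
    (μ : Measure E) (α : ℝ) (c : ℝ × E) (r : ℝ) (m : ℝ × E → ℝ) : Prop :=
  0 < r ∧ pball c r ⊆ Xset E ∧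
  IntegrableOn m (Xset E) (pmeas μ) ∧
  (∫ p in Xset E, m p ∂(pmeas μ)) = 0 ∧
  ∀ j : ℕ, 1 ≤ j →
    eLpNorm m 2 ((pmeas μ).restrict (molBall c r j)) ≤
      ENNReal.ofReal ((2:ℝ) ^ (-(j:ℝ) * α)) *
        (pmeas μ (pball c (2 ^ (j + 1) * r) ∩ Xset E)) ^ (-(1:ℝ)/2)

/- ---------------------------------------------------------------------------
   Auxiliary lemmas
--------------------------------------------------------------------------- -/

section AuxGeneral

open scoped ENNReal NNReal

lemma rpow_neg_half_le {a b : ℝ≥0∞} {K : ℝ} (hK : 0 ≤ K) (ha0 : a ≠ 0) (hat : a ≠ ⊤)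
    (hb0 : b ≠ 0) (hbt : b ≠ ⊤) (h : b ≤ ENNReal.ofReal K * a) :
    a ^ (-(1:ℝ)/2) ≤ ENNReal.ofReal (Real.sqrt K) * b ^ (-(1:ℝ)/2) := by
  have h1 : b ^ ((1:ℝ)/2) ≤ (ENNReal.ofReal K) ^ ((1:ℝ)/2) * a ^ ((1:ℝ)/2) := by
    rw [← ENNReal.mul_rpow_of_nonneg _ _ (by norm_num)]
    exact ENNReal.rpow_le_rpow h (by norm_num)
  have hsq : (ENNReal.ofReal K) ^ ((1:ℝ)/2) = ENNReal.ofReal (Real.sqrt K) := by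
    rw [Real.sqrt_eq_rpow, ENNReal.ofReal_rpow_of_nonneg hK (by norm_num : (0:ℝ) ≤ 1/2)]
  calc a ^ (-(1:ℝ)/2) = (b ^ (-(1:ℝ)/2) * b ^ ((1:ℝ)/2)) * a ^ (-(1:ℝ)/2) := by
        rw [← ENNReal.rpow_add _ _ hb0 hbt]; norm_num
    _ ≤ (b ^ (-(1:ℝ)/2) * ((ENNReal.ofReal K) ^ ((1:ℝ)/2) * a ^ ((1:ℝ)/2))) * a ^ (-(1:ℝ)/2) := by
        gcongr
    _ = (ENNReal.ofReal K) ^ ((1:ℝ)/2) * (a ^ ((1:ℝ)/2) * a ^ (-(1:ℝ)/2)) * b ^ (-(1:ℝ)/2) := by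
        ring
    _ = ENNReal.ofReal (Real.sqrt K) * b ^ (-(1:ℝ)/2) := by
        rw [← ENNReal.rpow_add _ _ ha0 hat, hsq]; norm_num

variable {X' : Type*} [MeasurableSpace X'] {ν : Measure X'} {S : Set X'}

lemma normInd_integrable (hS : MeasurableSet S) (ht : ν S ≠ ⊤) :
    Integrable (S.indicator fun _ => ((ν S).toReal)⁻¹) ν := by
  exact (integrable_indicator_iff hS).2 ((integrableOn_const ht))

lemma normInd_integral (hS : MeasurableSet S) (h0 : ν S ≠ 0) (ht : ν S ≠ ⊤) :
    (∫ p, S.indicator (fun _ => ((ν S).toReal)⁻¹) p ∂ν) = 1 := by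
  rw [integral_indicator_const _ hS, smul_eq_mul]
  rw [measureReal_def, mul_inv_cancel₀ (by simp [ENNReal.toReal_eq_zero_iff, h0, ht])]

lemma normInd_eLpNorm_one (hS : MeasurableSet S) (h0 : ν S ≠ 0) (ht : ν S ≠ ⊤) :
    eLpNorm (S.indicator fun _ => ((ν S).toReal)⁻¹) 1 ν = 1 := by
  rw [eLpNorm_indicator_const hS one_ne_zero ENNReal.one_ne_top]
  simp only [ENNReal.toReal_one, div_one, ENNReal.rpow_one]
  rw [← ofReal_norm, Real.norm_eq_abs, abs_of_nonneg (by positivity)]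
  rw [ENNReal.ofReal_inv_of_pos (ENNReal.toReal_pos h0 ht), ENNReal.ofReal_toReal ht]
  exact ENNReal.inv_mul_cancel h0 ht

lemma normInd_eLpNorm_two (hS : MeasurableSet S) (h0 : ν S ≠ 0) (ht : ν S ≠ ⊤) :
    eLpNorm (S.indicator fun _ => ((ν S).toReal)⁻¹) 2 ν = (ν S) ^ (-(1:ℝ)/2) := by
  rw [eLpNorm_indicator_const hS (by norm_num) (by norm_num)]
  rw [← ofReal_norm, Real.norm_eq_abs,
    abs_of_nonneg (by positivity),
    ENNReal.ofReal_inv_of_pos (ENNReal.toReal_pos h0 ht), ENNReal.ofReal_toReal ht]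
  have : (ν S)⁻¹ = (ν S) ^ (-1 : ℝ) := by rw [ENNReal.rpow_neg_one]
  rw [this, ← ENNReal.rpow_add _ _ h0 ht]
  norm_num

lemma setLIntegral_nnnorm_le {f : X' → ℝ} (hf : AEStronglyMeasurable f (ν.restrict S)) :
    (∫⁻ p in S, ‖f p‖₊ ∂ν) ≤ eLpNorm f 2 (ν.restrict S) * (ν S) ^ ((1:ℝ)/2) := by
  have h := eLpNorm_le_eLpNorm_mul_rpow_measure_univ (p := 1) (q := 2)
    (by norm_num) hf
  rw [eLpNorm_one_eq_lintegral_enorm] at h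
  rwa [Measure.restrict_apply_univ,
    show (1:ℝ)/(1:ℝ≥0∞).toReal - 1/(2:ℝ≥0∞).toReal = (1:ℝ)/2 by norm_num] at h

lemma abs_setIntegral_le {f : X' → ℝ} :
    |∫ p in S, f p ∂ν| ≤ ((∫⁻ p in S, ‖f p‖₊ ∂ν)).toReal := by
  rw [← Real.norm_eq_abs]
  refine (norm_integral_le_lintegral_norm f).trans (le_of_eq ?_)
  congr 1
  refine lintegral_congr fun p => ?_
  exact ofReal_norm _

end AuxGeneral

section AuxPball
set_option linter.unusedSectionVars false
variable {E : Type*} [MetricSpace E] [MeasurableSpace E] [BorelSpace E] {μ : Measure E}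

lemma pball_eq_prod (c : ℝ × E) {ρ : ℝ} (hρ : 0 < ρ) :
    pball c ρ = Ioo (c.1 - ρ^2) (c.1 + ρ^2) ×ˢ ball c.2 ρ := by
  ext p
  simp only [pball, pdist, mem_setOf_eq, max_lt_iff, mem_prod, mem_Ioo, mem_ball,
    Real.sqrt_lt' hρ, abs_sub_lt_iff]
  constructor
  · rintro ⟨⟨h1, h2⟩, h3⟩; exact ⟨⟨by linarith, by linarith⟩, h3⟩
  · rintro ⟨⟨h1, h2⟩, h3⟩; exact ⟨⟨by linarith, by linarith⟩, h3⟩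

lemma measurableSet_pball (c : ℝ × E) {ρ : ℝ} (hρ : 0 < ρ) :
    MeasurableSet (pball c ρ) := by
  rw [pball_eq_prod c hρ]
  exact measurableSet_Ioo.prod measurableSet_ball

lemma measurableSet_Xset : MeasurableSet (Xset E) :=
  measurable_fst measurableSet_Ioi

lemma pball_mono (c : ℝ × E) {ρ₁ ρ₂ : ℝ} (h : ρ₁ ≤ ρ₂) : pball c ρ₁ ⊆ pball c ρ₂ :=
  fun _ hp => lt_of_lt_of_le hp h

lemma pmeas_pball [SFinite μ] (c : ℝ × E) {ρ : ℝ} (hρ : 0 < ρ) :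
    pmeas μ (pball c ρ) = ENNReal.ofReal (2 * ρ^2) * μ (ball c.2 ρ) := by
  rw [pball_eq_prod c hρ, pmeas, Measure.prod_prod, Real.volume_Ioo]
  congr 1
  rw [show c.1 + ρ^2 - (c.1 - ρ^2) = 2*ρ^2 by ring]

lemma doubling_pow {C_D : ℝ} (hD : DoublingWith μ C_D) (x : E) {s : ℝ} (hs : 0 < s) (k : ℕ) :
    μ (ball x (2^k * s)) ≤ (ENNReal.ofReal C_D)^k * μ (ball x s) := by
  induction k with
  | zero => simp
  | succ n ih =>
      have h2 : (2:ℝ)^(n+1) * s = 2 * (2^n * s) := by ring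
      rw [h2]
      calc μ (ball x (2 * (2^n * s))) ≤ ENNReal.ofReal C_D * μ (ball x (2^n * s)) :=
            hD.2 x _ (by positivity)
        _ ≤ ENNReal.ofReal C_D * ((ENNReal.ofReal C_D)^n * μ (ball x s)) := by
            exact mul_le_mul_right ih _
        _ = (ENNReal.ofReal C_D)^(n+1) * μ (ball x s) := by ring

lemma prod_inter_Xset (A : Set ℝ) (B : Set E) :
    (A ×ˢ B) ∩ Xset E = (A ∩ Ioi 0) ×ˢ B := by
  ext p
  simp only [mem_inter_iff, mem_prod, Xset, mem_setOf_eq, mem_Ioi]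
  tauto

lemma Ioo_inter_Ioi (a b : ℝ) : Ioo a b ∩ Ioi 0 = Ioo (max a 0) b := by
  ext t; simp only [mem_inter_iff, mem_Ioo, mem_Ioi, max_lt_iff]; tauto

lemma pmeas_pball_inter_Xset_ge [SFinite μ] (c : ℝ × E) {ρ : ℝ} (hρ : 0 < ρ)
    (hc : 0 ≤ c.1) :
    ENNReal.ofReal (ρ^2) * μ (ball c.2 ρ) ≤ pmeas μ (pball c ρ ∩ Xset E) := by
  rw [pball_eq_prod c hρ, prod_inter_Xset, pmeas, Measure.prod_prod,
    Ioo_inter_Ioi, Real.volume_Ioo]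
  gcongr
  rcases le_total (c.1 - ρ^2) 0 with h | h
  · rw [max_eq_right h]; nlinarith
  · rw [max_eq_left h]; nlinarith

lemma sigmaFinite_of_doubling {C_D : ℝ} (hD : DoublingWith μ C_D) (x₀ : E) :
    SigmaFinite μ := by
  refine ⟨⟨⟨fun n => ball x₀ (n+1), fun _ => trivial,
    fun n => (hD.1 x₀ (n+1) (by positivity)).2, ?_⟩⟩⟩
  ext x
  simp only [mem_iUnion, mem_univ, iff_true, mem_ball]
  obtain ⟨n, hn⟩ := exists_nat_gt (dist x x₀)
  exact ⟨n, by linarith⟩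

lemma pball_subset_Xset_imp {c : ℝ × E} {r : ℝ} (hr : 0 < r) (h : pball c r ⊆ Xset E) :
    r^2 ≤ c.1 := by
  by_contra h'
  push_neg at h'
  set t : ℝ := max c.1 (r^2/2) with ht
  have ht0 : 0 ≤ t := le_max_of_le_right (by positivity)
  have htr : t < r^2 := max_lt h' (by nlinarith)
  have hmem : (c.1 - t, c.2) ∈ pball c r := by
    simp only [pball, pdist, mem_setOf_eq]
    rw [max_lt_iff]
    constructor
    · simp only [show c.1 - t - c.1 = -t by ring, abs_neg, abs_of_nonneg ht0]
      rw [show r = Real.sqrt (r^2) by rw [Real.sqrt_sq hr.le]]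
      exact Real.sqrt_lt_sqrt ht0 htr
    · simpa using hr
  have hX := h hmem
  simp only [Xset, mem_setOf_eq] at hX
  have hct : c.1 ≤ t := le_max_left _ _
  simp only [ht] at hX
  linarith

end AuxPball

section AuxShell
variable {E : Type*} [MetricSpace E] (c : ℝ × E) {r : ℝ}

lemma molBall_one : molBall c r 1 = pball c (2^2 * r) ∩ Xset E := by
  simp [molBall]; norm_num

lemma molBall_of_ge {j : ℕ} (hj : 2 ≤ j) :
    molBall c r j = (pball c (2^(j+1) * r) \ pball c (2^j * r)) ∩ Xset E := by
  rw [molBall, if_neg (by omega)]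

lemma molBall_subset {j : ℕ} (hj : 1 ≤ j) :
    molBall c r j ⊆ pball c (2^(j+1) * r) ∩ Xset E := by
  rcases eq_or_lt_of_le hj with h | h
  · rw [← h, molBall_one]
  · rw [molBall_of_ge c h]
    exact inter_subset_inter_left _ diff_subset

lemma molBall_subset_Xset (j : ℕ) : molBall c r j ⊆ Xset E := by
  rw [molBall]; split <;> exact inter_subset_right

lemma molBall_disjoint_pball (hr : 0 < r) {j k : ℕ} (hj : 2 ≤ j) (hk : k ≤ j) :
    Disjoint (molBall c r j) (pball c (2^k * r)) := by
  rw [molBall_of_ge c hj, disjoint_left]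
  rintro p ⟨⟨-, hp2⟩, -⟩ hp3
  simp only [pball, mem_setOf_eq] at hp2 hp3
  exact hp2 (lt_of_lt_of_le hp3 (by
    have : (2:ℝ)^k ≤ 2^j := pow_le_pow_right₀ (by norm_num) hk
    nlinarith))

lemma molBall_disjoint (hr : 0 < r) {i j : ℕ} (hi : 1 ≤ i) (hij : i < j) :
    Disjoint (molBall c r i) (molBall c r j) := by
  have h2j : 2 ≤ j := by omega
  have h1 : molBall c r i ⊆ pball c (2^(i+1) * r) :=
    (molBall_subset c hi).trans inter_subset_left
  exact (Disjoint.mono_right h1 (molBall_disjoint_pball c hr h2j (by omega))).symm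

lemma mem_molBall_of (p : ℝ × E) (hp : p ∈ Xset E) {j : ℕ} (hj : 2 ≤ j)
    (h1 : pdist p c < 2^(j+1) * r) (h2 : ¬ pdist p c < 2^j * r) :
    p ∈ molBall c r j := by
  rw [molBall_of_ge c hj]
  exact ⟨⟨h1, h2⟩, hp⟩

lemma exists_shell (hr : 0 < r) (p : ℝ × E) (hp : p ∈ Xset E) {k : ℕ} (hk : 1 ≤ k)
    (hd : ¬ pdist p c < 2^(k+1) * r) : ∃ j, k+1 ≤ j ∧ p ∈ molBall c r j := by
  have hex : ∃ n, pdist p c < 2^(n+1) * r := by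
    obtain ⟨n, hn⟩ := pow_unbounded_of_one_lt (pdist p c / r) (by norm_num : (1:ℝ) < 2)
    refine ⟨n, by rw [div_lt_iff₀ hr] at hn; calc pdist p c < 2^n * r := hn
      _ ≤ 2^(n+1) * r := by
        have h1 : (2:ℝ)^n ≤ 2^(n+1) := pow_le_pow_right₀ (by norm_num) (by omega)
        nlinarith⟩
  classical
  set n₀ := Nat.find hex with hn₀
  have hlt : pdist p c < 2^(n₀+1) * r := Nat.find_spec hex
  have hge : k + 1 ≤ n₀ := by
    by_contra h
    exact hd (lt_of_lt_of_le hlt (by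
      have : n₀ + 1 ≤ k + 1 := by omega
      have := pow_le_pow_right₀ (show (1:ℝ) ≤ 2 by norm_num) this
      nlinarith))
  refine ⟨n₀, hge, mem_molBall_of c p hp (by omega) hlt ?_⟩
  have := Nat.find_min hex (m := n₀ - 1) (by omega)
  have hn : n₀ - 1 + 1 = n₀ := by omega
  rwa [hn] at this

lemma iUnion_shells_tail (hr : 0 < r) {k : ℕ} (hk : 1 ≤ k) :
    ⋃ n, molBall c r (k+1+n) = Xset E \ pball c (2^(k+1) * r) := by
  apply Subset.antisymm
  · refine iUnion_subset fun n => ?_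
    refine subset_diff.2 ⟨molBall_subset_Xset c _, ?_⟩
    exact molBall_disjoint_pball c hr (by omega) (by omega)
  · rintro p ⟨hpX, hpQ⟩
    obtain ⟨j, hj, hmem⟩ := exists_shell c hr p hpX hk hpQ
    exact mem_iUnion.2 ⟨j - (k+1), by rwa [show k+1+(j-(k+1)) = j by omega]⟩

lemma iUnion_shells (hr : 0 < r) : ⋃ n, molBall c r (1+n) = Xset E := by
  apply Subset.antisymm
  · exact iUnion_subset fun n => molBall_subset_Xset c _
  · intro p hp
    by_cases h : pdist p c < 2^2 * r
    · exact mem_iUnion.2 ⟨0, by rw [molBall_one]; exact ⟨h, hp⟩⟩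
    · obtain ⟨j, hj, hmem⟩ := exists_shell c hr p hp le_rfl h
      exact mem_iUnion.2 ⟨j - 1, by rwa [show 1+(j-1) = j by omega]⟩

lemma union_molBall_step (hr : 0 < r) {k : ℕ} (hk : 1 ≤ k) :
    (pball c (2^(k+1) * r) ∩ Xset E) ∪ molBall c r (k+1) = pball c (2^(k+2) * r) ∩ Xset E := by
  rw [molBall_of_ge c (by omega), ← union_inter_distrib_right]
  congr 1
  refine union_diff_cancel' Subset.rfl ?_
  intro x hx
  simp only [pball, mem_setOf_eq] at hx ⊢
  exact lt_of_lt_of_le hx (by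
    have : (2:ℝ)^(k+1) ≤ 2^(k+2) := pow_le_pow_right₀ (by norm_num) (by omega)
    nlinarith)

end AuxShell

/- ---------------------------------------------------------------------------
   Main theorem
--------------------------------------------------------------------------- -/

set_option maxHeartbeats 2000000 in
/-- molecules form a bounded subset of `H¹_z(X)`: for every `α > 0` there is a
constant `C` depending only on `α` and the doubling constant `C_D` such that every molecule
with parameter `α` associated to a ball `Q ⊆ X` lies in `H¹_z(X)` with norm at most `C`. -/
theorem stmt6 (α : ℝ) (hα : 0 < α) (C_D : ℝ) (hCD : 1 ≤ C_D) :
    ∃ C : ℝ, 0 < C ∧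
      ∀ (E : Type) (_ : MetricSpace E) (_ : MeasurableSpace E), BorelSpace E →
        ∀ μ : Measure E, DoublingWith μ C_D →
          ∀ (m : ℝ × E → ℝ) (c : ℝ × E) (r : ℝ), IsMolecule μ α c r m →
            MemH1z μ m ∧ H1znorm μ m ≤ C := by
  classical
  have hq0 : 0 < (2:ℝ)^(-α) := Real.rpow_pos_of_pos (by norm_num) _
  set q : ℝ := (2:ℝ)^(-α) with hqdef
  have hq1 : q < 1 := Real.rpow_lt_one_of_one_lt_of_neg (by norm_num) (by linarith)
  have h1q : 0 < 1 - q := by linarith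
  have h1qi : 1 ≤ (1-q)⁻¹ := by
    have h := mul_inv_cancel₀ h1q.ne'
    have h2 := inv_pos.2 h1q
    nlinarith
  have hsq0 : (0:ℝ) ≤ Real.sqrt q := Real.sqrt_nonneg q
  have hsq1 : Real.sqrt q < 1 := by
    rw [show (1:ℝ) = Real.sqrt 1 by simp]
    exact Real.sqrt_lt_sqrt hq0.le hq1
  have h1sq : 0 < 1 - Real.sqrt q := by linarith
  have hsCD0 : (0:ℝ) ≤ Real.sqrt C_D := Real.sqrt_nonneg C_D
  have hsCD1 : (1:ℝ) ≤ Real.sqrt C_D := by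
    rw [show (1:ℝ) = Real.sqrt 1 by simp]
    exact Real.sqrt_le_sqrt hCD
  set K : ℝ := 8 * (1 + Real.sqrt C_D) * (1-q)⁻¹ with hKdef
  have hK8 : 8 ≤ K := by
    rw [hKdef]; nlinarith
  have hKpos : 0 < K := by linarith
  have hCpos : 0 < K * (1 - Real.sqrt q)⁻¹ + 1 := by
    have : 0 < K * (1 - Real.sqrt q)⁻¹ := mul_pos hKpos (inv_pos.2 h1sq)
    linarith
  refine ⟨K * (1 - Real.sqrt q)⁻¹ + 1, hCpos, ?_⟩
  intro E iM iMS iB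
  letI : MetricSpace E := iM
  letI : MeasurableSpace E := iMS
  haveI : BorelSpace E := iB
  intro μ hD m c r hmol
  obtain ⟨hr, hQX, hmInt, hmZero, hmBd⟩ := hmol
  haveI : SigmaFinite μ := sigmaFinite_of_doubling hD c.2
  -- basic measure facts
  have hrk : ∀ k : ℕ, 0 < (2:ℝ)^k * r := fun k => by positivity
  have hQmeas : ∀ k : ℕ, MeasurableSet (pball c ((2:ℝ)^k * r)) :=
    fun k => measurableSet_pball c (hrk k)
  have hQpos : ∀ k : ℕ, 0 < pmeas μ (pball c ((2:ℝ)^k * r)) := by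
    intro k
    rw [pmeas_pball c (hrk k)]
    have h1 : (0:ℝ) < 2*((2:ℝ)^k*r)^2 := by positivity
    exact ENNReal.mul_pos (ENNReal.ofReal_pos.2 h1).ne' ((hD.1 c.2 _ (hrk k)).1).ne'
  have hQtop : ∀ k : ℕ, pmeas μ (pball c ((2:ℝ)^k * r)) < ⊤ := by
    intro k
    rw [pmeas_pball c (hrk k)]
    exact ENNReal.mul_lt_top ENNReal.ofReal_lt_top ((hD.1 c.2 _ (hrk k)).2)
  have hQdouble : ∀ k : ℕ, pmeas μ (pball c ((2:ℝ)^(k+1) * r)) ≤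
      ENNReal.ofReal (4*C_D) * pmeas μ (pball c ((2:ℝ)^k * r)) := by
    intro k
    rw [pmeas_pball c (hrk (k+1)), pmeas_pball c (hrk k)]
    have h2 : (2:ℝ)^(k+1) * r = 2 * ((2:ℝ)^k * r) := by ring
    rw [h2]
    calc ENNReal.ofReal (2*(2*((2:ℝ)^k*r))^2) * μ (ball c.2 (2*((2:ℝ)^k*r)))
        ≤ ENNReal.ofReal (2*(2*((2:ℝ)^k*r))^2) *
          (ENNReal.ofReal C_D * μ (ball c.2 ((2:ℝ)^k*r))) :=
          mul_le_mul_right (hD.2 c.2 _ (hrk k)) _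
      _ = (ENNReal.ofReal (2*(2*((2:ℝ)^k*r))^2) * ENNReal.ofReal C_D) *
          μ (ball c.2 ((2:ℝ)^k*r)) := by ring
      _ = (ENNReal.ofReal (4*C_D) * ENNReal.ofReal (2*((2:ℝ)^k*r)^2)) *
          μ (ball c.2 ((2:ℝ)^k*r)) := by
            rw [← ENNReal.ofReal_mul (by positivity), ← ENNReal.ofReal_mul (by linarith)]
            congr 1; ring
      _ = ENNReal.ofReal (4*C_D) * (ENNReal.ofReal (2*((2:ℝ)^k*r)^2) *
          μ (ball c.2 ((2:ℝ)^k*r))) := by ring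
  have hc1 : (0:ℝ) ≤ c.1 := le_trans (by positivity) (pball_subset_Xset_imp hr hQX)
  have hEhalf : ∀ j : ℕ, pmeas μ (pball c ((2:ℝ)^(j+1)*r)) ≤
      ENNReal.ofReal 2 * pmeas μ (pball c ((2:ℝ)^(j+1)*r) ∩ Xset E) := by
    intro j
    have h := pmeas_pball_inter_Xset_ge (μ := μ) c (hrk (j+1)) hc1
    rw [pmeas_pball c (hrk (j+1))]
    calc ENNReal.ofReal (2*((2:ℝ)^(j+1)*r)^2) * μ (ball c.2 ((2:ℝ)^(j+1)*r))
        = ENNReal.ofReal 2 * (ENNReal.ofReal (((2:ℝ)^(j+1)*r)^2) *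
          μ (ball c.2 ((2:ℝ)^(j+1)*r))) := by
          rw [← mul_assoc, ← ENNReal.ofReal_mul (by norm_num)]
      _ ≤ ENNReal.ofReal 2 * pmeas μ (pball c ((2:ℝ)^(j+1)*r) ∩ Xset E) :=
          mul_le_mul_right h _
  have hEle : ∀ j : ℕ, pmeas μ (pball c ((2:ℝ)^(j+1)*r) ∩ Xset E) ≤
      pmeas μ (pball c ((2:ℝ)^(j+1)*r)) := fun j => measure_mono inter_subset_left
  have hE0 : ∀ j : ℕ, pmeas μ (pball c ((2:ℝ)^(j+1)*r) ∩ Xset E) ≠ 0 := by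
    intro j h
    have h2 := hEhalf j
    rw [h, mul_zero] at h2
    exact (hQpos (j+1)).ne' (le_antisymm h2 zero_le)
  have hEtop : ∀ j : ℕ, pmeas μ (pball c ((2:ℝ)^(j+1)*r) ∩ Xset E) ≠ ⊤ :=
    fun j => ((hEle j).trans_lt (hQtop (j+1))).ne
  have hEmeas : ∀ j : ℕ, MeasurableSet (pball c ((2:ℝ)^(j+1)*r) ∩ Xset E) :=
    fun j => (hQmeas (j+1)).inter measurableSet_Xset
  have hEmono : ∀ j : ℕ, (pball c ((2:ℝ)^(j+1)*r) ∩ Xset E) ⊆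
      (pball c ((2:ℝ)^(j+2)*r) ∩ Xset E) := by
    intro j
    refine inter_subset_inter_left _ (pball_mono c ?_)
    have : (2:ℝ)^(j+1) ≤ 2^(j+2) := pow_le_pow_right₀ (by norm_num) (by omega)
    nlinarith
  have hBmeas : ∀ j : ℕ, MeasurableSet (molBall c r j) := by
    intro j
    rw [molBall]
    split
    · exact (measurableSet_pball c (by positivity : (0:ℝ) < 4*r)).inter measurableSet_Xset
    · exact ((measurableSet_pball c (hrk (j+1))).diff
        (measurableSet_pball c (hrk j))).inter measurableSet_Xset
  have hmB : ∀ j : ℕ, IntegrableOn m (molBall c r j) (pmeas μ) :=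
    fun j => hmInt.mono_set (molBall_subset_Xset c j)
  have hmjInt : ∀ j : ℕ, Integrable ((molBall c r j).indicator m) (pmeas μ) :=
    fun j => (hmB j).integrable_indicator (hBmeas j)
  have hqpow : ∀ j : ℕ, ((2:ℝ)^(-(j:ℝ)*α)) = q^j := by
    intro j
    rw [hqdef, ← Real.rpow_natCast ((2:ℝ)^(-α)) j,
      ← Real.rpow_mul (by norm_num : (0:ℝ) ≤ 2)]
    congr 1; ring
  have hL2 : ∀ j : ℕ, 1 ≤ j → eLpNorm m 2 ((pmeas μ).restrict (molBall c r j)) ≤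
      ENNReal.ofReal (q^j) *
        (pmeas μ (pball c ((2:ℝ)^(j+1)*r) ∩ Xset E))^(-(1:ℝ)/2) := by
    intro j hj
    have h := hmBd j hj
    rwa [hqpow j] at h
  have hL1 : ∀ j : ℕ, 1 ≤ j →
      (∫⁻ p in molBall c r j, ‖m p‖₊ ∂(pmeas μ)) ≤ ENNReal.ofReal (q^j) := by
    intro j hj
    refine (setLIntegral_nnnorm_le (hmB j).1).trans ?_
    calc eLpNorm m 2 ((pmeas μ).restrict (molBall c r j)) *
          (pmeas μ (molBall c r j))^((1:ℝ)/2)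
        ≤ (ENNReal.ofReal (q^j) *
            (pmeas μ (pball c ((2:ℝ)^(j+1)*r) ∩ Xset E))^(-(1:ℝ)/2)) *
          (pmeas μ (pball c ((2:ℝ)^(j+1)*r) ∩ Xset E))^((1:ℝ)/2) := by
          refine mul_le_mul (hL2 j hj) ?_ zero_le zero_le
          exact ENNReal.rpow_le_rpow (measure_mono (molBall_subset c hj)) (by norm_num)
      _ = ENNReal.ofReal (q^j) *
          ((pmeas μ (pball c ((2:ℝ)^(j+1)*r) ∩ Xset E))^(-(1:ℝ)/2) *
           (pmeas μ (pball c ((2:ℝ)^(j+1)*r) ∩ Xset E))^((1:ℝ)/2)) := by ring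
      _ = ENNReal.ofReal (q^j) := by
          rw [← ENNReal.rpow_add _ _ (hE0 j) (hEtop j)]
          norm_num
  -- the pieces I, N
  set I : ℕ → ℝ := fun j => ∫ p in molBall c r j, m p ∂(pmeas μ) with hIdef
  have hIabs : ∀ j : ℕ, 1 ≤ j → |I j| ≤ q^j := by
    intro j hj
    have h1 : |I j| ≤ ((∫⁻ p in molBall c r j, ‖m p‖₊ ∂(pmeas μ))).toReal := by
      rw [hIdef]; exact abs_setIntegral_le
    refine h1.trans ?_
    have h2 := ENNReal.toReal_mono ENNReal.ofReal_ne_top (hL1 j hj)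
    rwa [ENNReal.toReal_ofReal (by positivity)] at h2
  have hIabsSummable : ∀ j : ℕ, 1 ≤ j → Summable (fun n => |I (j+n)|) := by
    intro j hj
    refine Summable.of_nonneg_of_le (fun n => abs_nonneg _) (fun n => ?_)
      ((summable_geometric_of_lt_one hq0.le hq1).mul_left (q^j))
    calc |I (j+n)| ≤ q^(j+n) := hIabs _ (by omega)
      _ = q^j * q^n := pow_add q j n
  have hIsummable : ∀ j : ℕ, 1 ≤ j → Summable (fun n => I (j+n)) :=
    fun j hj => (hIabsSummable j hj).of_abs
  set N : ℕ → ℝ := fun j => ∑' n, I (j+n) with hNdef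
  have hNabs : ∀ j : ℕ, 1 ≤ j → |N j| ≤ q^j * (1-q)⁻¹ := by
    intro j hj
    rw [hNdef]
    calc |∑' n, I (j+n)| ≤ ∑' n, |I (j+n)| := by
          simpa only [Real.norm_eq_abs] using
            norm_tsum_le_tsum_norm (f := fun n => I (j+n))
              (by simpa only [Real.norm_eq_abs] using hIabsSummable j hj)
      _ ≤ ∑' n : ℕ, q^j * q^n := by
          refine Summable.tsum_le_tsum (fun n => ?_) (hIabsSummable j hj)
            ((summable_geometric_of_lt_one hq0.le hq1).mul_left (q^j))
          rw [← pow_add]; exact hIabs _ (by omega)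
      _ = q^j * (1-q)⁻¹ := by rw [tsum_mul_left, tsum_geometric_of_lt_one hq0.le hq1]
  have hNrec : ∀ j : ℕ, 1 ≤ j → N j = I j + N (j+1) := by
    intro j hj
    show (∑' n, I (j+n)) = I j + ∑' n, I ((j+1)+n)
    rw [Summable.tsum_eq_zero_add (hIsummable j hj)]
    congr 1
    apply tsum_congr; intro n; congr 1; omega
  have hpairwise : ∀ k : ℕ, 1 ≤ k →
      Pairwise (Function.onFun Disjoint (fun n => molBall c r (k+n))) := by
    intro k hk i j hne
    rcases lt_or_gt_of_ne hne with h | h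
    · exact molBall_disjoint c hr (by omega) (by omega)
    · exact (molBall_disjoint c hr (by omega) (by omega)).symm
  have hXeq : Xset E = ⋃ n, molBall c r (1+n) := (iUnion_shells c hr).symm
  have hN1 : N 1 = 0 := by
    have h2 : ∫ p in (⋃ n, molBall c r (1+n)), m p ∂(pmeas μ) = ∑' n, I (1+n) := by
      rw [hIdef]
      exact integral_iUnion (fun n => hBmeas _) (hpairwise 1 le_rfl)
        (by rw [← hXeq]; exact hmInt)
    show (∑' n, I (1+n)) = 0
    rw [← h2, ← hXeq, hmZero]
  have htail : ∀ k : ℕ, 1 ≤ k →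
      (∫⁻ p in Xset E \ pball c ((2:ℝ)^(k+1)*r), ‖m p‖₊ ∂(pmeas μ)) ≤
        ENNReal.ofReal (q^(k+1) * (1-q)⁻¹) := by
    intro k hk
    rw [← iUnion_shells_tail c hr hk]
    rw [lintegral_iUnion (fun n => hBmeas _) (hpairwise (k+1) (by omega)) _]
    calc ∑' n, ∫⁻ p in molBall c r (k+1+n), ‖m p‖₊ ∂(pmeas μ)
        ≤ ∑' n, ENNReal.ofReal (q^(k+1+n)) :=
          ENNReal.tsum_le_tsum (fun n => hL1 _ (by omega))
      _ = ENNReal.ofReal (∑' n, q^(k+1+n)) := by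
          refine (ENNReal.ofReal_tsum_of_nonneg (fun n => by positivity) ?_).symm
          have : (fun n : ℕ => q^(k+1+n)) = fun n => q^(k+1) * q^n := by
            funext n; rw [pow_add]
          rw [this]
          exact (summable_geometric_of_lt_one hq0.le hq1).mul_left _
      _ = ENNReal.ofReal (q^(k+1) * (1-q)⁻¹) := by
          congr 1
          have : (fun n : ℕ => q^(k+1+n)) = fun n => q^(k+1) * q^n := by
            funext n; rw [pow_add]
          rw [this, tsum_mul_left, tsum_geometric_of_lt_one hq0.le hq1]
  -- normalized indicators and the functions g
  set hfun : ℕ → ℝ × E → ℝ := fun j =>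
    (pball c ((2:ℝ)^(j+1)*r) ∩ Xset E).indicator
      (fun _ => ((pmeas μ (pball c ((2:ℝ)^(j+1)*r) ∩ Xset E)).toReal)⁻¹) with hhdef
  have hh_int : ∀ j : ℕ, Integrable (hfun j) (pmeas μ) :=
    fun j => normInd_integrable (hEmeas j) (hEtop j)
  have hh_integral : ∀ j : ℕ, (∫ p, hfun j p ∂(pmeas μ)) = 1 :=
    fun j => normInd_integral (hEmeas j) (hE0 j) (hEtop j)
  have hh_one : ∀ j : ℕ, eLpNorm (hfun j) 1 (pmeas μ) = 1 :=
    fun j => normInd_eLpNorm_one (hEmeas j) (hE0 j) (hEtop j)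
  have hh_two : ∀ j : ℕ, eLpNorm (hfun j) 2 (pmeas μ) =
      (pmeas μ (pball c ((2:ℝ)^(j+1)*r) ∩ Xset E))^(-(1:ℝ)/2) :=
    fun j => normInd_eLpNorm_two (hEmeas j) (hE0 j) (hEtop j)
  have hh_zero : ∀ j : ℕ, ∀ p, p ∉ (pball c ((2:ℝ)^(j+1)*r) ∩ Xset E) → hfun j p = 0 :=
    fun j p hp => indicator_of_notMem hp _
  have hh_scaled_one : ∀ (t : ℝ) (j : ℕ),
      eLpNorm (fun p => t * hfun j p) 1 (pmeas μ) = ENNReal.ofReal |t| := by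
    intro t j
    rw [show (fun p => t * hfun j p) = t • hfun j from rfl, eLpNorm_const_smul,
      hh_one j, mul_one]
    rw [← ofReal_norm, Real.norm_eq_abs]
  set g : ℕ → ℝ × E → ℝ := fun j p => (molBall c r j).indicator m p - I j * hfun j p
    with hgdef
  have hg_int : ∀ j : ℕ, Integrable (g j) (pmeas μ) :=
    fun j => (hmjInt j).sub ((hh_int j).const_mul (I j))
  have hg_integral : ∀ j : ℕ, (∫ p, g j p ∂(pmeas μ)) = 0 := by
    intro j
    show (∫ p, ((molBall c r j).indicator m p - I j * hfun j p) ∂(pmeas μ)) = 0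
    rw [integral_sub (hmjInt j) ((hh_int j).const_mul (I j)),
      integral_indicator (hBmeas j), integral_const_mul, hh_integral j, mul_one]
    show I j - I j = 0
    ring
  have hg_eLp2 : ∀ j : ℕ, 1 ≤ j → eLpNorm (g j) 2 (pmeas μ) ≤
      ENNReal.ofReal (2*q^j) *
        (pmeas μ (pball c ((2:ℝ)^(j+1)*r) ∩ Xset E))^(-(1:ℝ)/2) := by
    intro j hj
    have h1 : eLpNorm ((molBall c r j).indicator m) 2 (pmeas μ) ≤
        ENNReal.ofReal (q^j) *
          (pmeas μ (pball c ((2:ℝ)^(j+1)*r) ∩ Xset E))^(-(1:ℝ)/2) := by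
      rw [eLpNorm_indicator_eq_eLpNorm_restrict (hBmeas j)]
      exact hL2 j hj
    have h2 : eLpNorm (fun p => I j * hfun j p) 2 (pmeas μ) ≤
        ENNReal.ofReal (q^j) *
          (pmeas μ (pball c ((2:ℝ)^(j+1)*r) ∩ Xset E))^(-(1:ℝ)/2) := by
      rw [show (fun p => I j * hfun j p) = (I j) • hfun j from rfl,
        eLpNorm_const_smul, hh_two j]
      refine mul_le_mul_left ?_ _
      rw [← ofReal_norm, Real.norm_eq_abs]
      exact ENNReal.ofReal_le_ofReal (hIabs j hj)
    have h3 : eLpNorm (g j) 2 (pmeas μ) ≤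
        eLpNorm ((molBall c r j).indicator m) 2 (pmeas μ) +
        eLpNorm (fun p => I j * hfun j p) 2 (pmeas μ) :=
      eLpNorm_sub_le (hmjInt j).aestronglyMeasurable
        ((hh_int j).const_mul (I j)).aestronglyMeasurable one_le_two
    refine h3.trans ((add_le_add h1 h2).trans (le_of_eq ?_))
    rw [← add_mul, ← ENNReal.ofReal_add (by positivity) (by positivity)]
    congr 2
    ring
  have hg_eLp1 : ∀ j : ℕ, 1 ≤ j → eLpNorm (g j) 1 (pmeas μ) ≤ ENNReal.ofReal (2*q^j) := by
    intro j hj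
    have h1 : eLpNorm ((molBall c r j).indicator m) 1 (pmeas μ) ≤ ENNReal.ofReal (q^j) := by
      rw [eLpNorm_indicator_eq_eLpNorm_restrict (hBmeas j), eLpNorm_one_eq_lintegral_enorm]
      exact hL1 j hj
    have h3 : eLpNorm (g j) 1 (pmeas μ) ≤
        eLpNorm ((molBall c r j).indicator m) 1 (pmeas μ) +
        eLpNorm (fun p => I j * hfun j p) 1 (pmeas μ) :=
      eLpNorm_sub_le (hmjInt j).aestronglyMeasurable
        ((hh_int j).const_mul (I j)).aestronglyMeasurable le_rfl
    refine h3.trans ?_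
    rw [hh_scaled_one (I j) j]
    refine (add_le_add h1 (ENNReal.ofReal_le_ofReal (hIabs j hj))).trans (le_of_eq ?_)
    rw [← ENNReal.ofReal_add (by positivity) (by positivity)]
    congr 1; ring
  have hEQhalf : ∀ j : ℕ,
      (pmeas μ (pball c ((2:ℝ)^(j+1)*r) ∩ Xset E))^(-(1:ℝ)/2) ≤
      ENNReal.ofReal (Real.sqrt 2) * (pmeas μ (pball c ((2:ℝ)^(j+1)*r)))^(-(1:ℝ)/2) :=
    fun j => rpow_neg_half_le (by norm_num) (hE0 j) (hEtop j) (hQpos (j+1)).ne'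
      (hQtop (j+1)).ne (hEhalf j)
  have hQstep : ∀ j : ℕ,
      (pmeas μ (pball c ((2:ℝ)^(j+1)*r)))^(-(1:ℝ)/2) ≤
      ENNReal.ofReal (Real.sqrt (4*C_D)) * (pmeas μ (pball c ((2:ℝ)^(j+2)*r)))^(-(1:ℝ)/2) :=
    fun j => rpow_neg_half_le (by linarith) (hQpos (j+1)).ne' (hQtop (j+1)).ne
      (hQpos (j+2)).ne' (hQtop (j+2)).ne (hQdouble (j+1))
  -- coefficients
  set kap : ℝ := 2 * Real.sqrt 2 * Real.sqrt (4*C_D) with hkapdef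
  have hkap_pos : 0 < kap := by
    rw [hkapdef]
    have h4 : (0:ℝ) < 4*C_D := by linarith
    positivity
  set lamg : ℕ → ℝ := fun j => 2 * Real.sqrt 2 * q^j with hlamgdef
  have hlamg_pos : ∀ j, 0 < lamg j := by
    intro j
    show 0 < 2 * Real.sqrt 2 * q^j
    positivity
  -- the atoms
  have hAtomG : ∀ j : ℕ, 1 ≤ j → IsAtom12 μ (fun p => (lamg j)⁻¹ * g j p) := by
    intro j hj
    refine ⟨c, (2:ℝ)^(j+1)*r, hrk (j+1), ?_, (hg_int j).const_mul _, ?_, ?_⟩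
    · intro p hp
      simp only [Function.mem_support] at hp
      by_contra hpb
      apply hp
      have hpE : p ∉ pball c ((2:ℝ)^(j+1)*r) ∩ Xset E := fun h => hpb h.1
      have hpB : p ∉ molBall c r j := fun h => hpE (molBall_subset c hj h)
      show (lamg j)⁻¹ * ((molBall c r j).indicator m p - I j * hfun j p) = 0
      rw [indicator_of_notMem hpB, hh_zero j p hpE]
      ring
    · rw [integral_const_mul, hg_integral j, mul_zero]
    · rw [show (fun p => (lamg j)⁻¹ * g j p) = (lamg j)⁻¹ • g j from rfl,
        eLpNorm_const_smul]
      have hc2 : ‖(lamg j)⁻¹‖ₑ = ENNReal.ofReal (lamg j)⁻¹ := by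
        rw [← ofReal_norm, Real.norm_eq_abs,
          abs_of_nonneg (inv_nonneg.2 (hlamg_pos j).le)]
      rw [hc2]
      calc ENNReal.ofReal (lamg j)⁻¹ * eLpNorm (g j) 2 (pmeas μ)
          ≤ ENNReal.ofReal (lamg j)⁻¹ * (ENNReal.ofReal (2*q^j) *
            (ENNReal.ofReal (Real.sqrt 2) *
              (pmeas μ (pball c ((2:ℝ)^(j+1)*r)))^(-(1:ℝ)/2))) :=
            mul_le_mul_right ((hg_eLp2 j hj).trans
              (mul_le_mul_right (hEQhalf j) _)) _
        _ = (ENNReal.ofReal (lamg j)⁻¹ * (ENNReal.ofReal (2*q^j) *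
            ENNReal.ofReal (Real.sqrt 2))) *
            (pmeas μ (pball c ((2:ℝ)^(j+1)*r)))^(-(1:ℝ)/2) := by ring
        _ = ENNReal.ofReal ((lamg j)⁻¹ * (2*q^j * Real.sqrt 2)) *
            (pmeas μ (pball c ((2:ℝ)^(j+1)*r)))^(-(1:ℝ)/2) := by
            rw [← ENNReal.ofReal_mul (by positivity : (0:ℝ) ≤ 2*q^j),
              ← ENNReal.ofReal_mul (inv_nonneg.2 (hlamg_pos j).le)]
        _ = (pmeas μ (pball c ((2:ℝ)^(j+1)*r)))^(-(1:ℝ)/2) := by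
            have h1 : (lamg j)⁻¹ * (2*q^j * Real.sqrt 2) = 1 := by
              have h2 : 2*q^j * Real.sqrt 2 = lamg j := by
                show 2*q^j * Real.sqrt 2 = 2 * Real.sqrt 2 * q^j
                ring
              rw [h2]
              exact inv_mul_cancel₀ (hlamg_pos j).ne'
            rw [h1, ENNReal.ofReal_one, one_mul]
  have hAtomB : ∀ j : ℕ, 1 ≤ j →
      IsAtom12 μ (fun p => kap⁻¹ * (hfun (j+1) p - hfun j p)) := by
    intro j hj
    have hint : Integrable (fun p => hfun (j+1) p - hfun j p) (pmeas μ) :=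
      (hh_int (j+1)).sub (hh_int j)
    have hmono2 : (pmeas μ (pball c ((2:ℝ)^(j+1+1)*r) ∩ Xset E))^(-(1:ℝ)/2) ≤
        (pmeas μ (pball c ((2:ℝ)^(j+1)*r) ∩ Xset E))^(-(1:ℝ)/2) := by
      have h := rpow_neg_half_le (K := 1) (by norm_num) (hE0 (j+1)) (hEtop (j+1))
        (hE0 j) (hEtop j) (by
          rw [ENNReal.ofReal_one, one_mul]
          exact measure_mono (hEmono j))
      simpa using h
    refine ⟨c, (2:ℝ)^(j+2)*r, hrk (j+2), ?_, hint.const_mul _, ?_, ?_⟩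
    · intro p hp
      simp only [Function.mem_support] at hp
      by_contra hpb
      apply hp
      have hpE1 : p ∉ pball c ((2:ℝ)^(j+1+1)*r) ∩ Xset E := fun h => hpb h.1
      have hpE0 : p ∉ pball c ((2:ℝ)^(j+1)*r) ∩ Xset E := fun h => hpE1 (hEmono j h)
      rw [hh_zero (j+1) p hpE1, hh_zero j p hpE0]
      ring
    · rw [integral_const_mul, integral_sub (hh_int (j+1)) (hh_int j),
        hh_integral (j+1), hh_integral j]
      ring
    · rw [show (fun p => kap⁻¹ * (hfun (j+1) p - hfun j p)) =
        kap⁻¹ • (hfun (j+1) - hfun j) from rfl, eLpNorm_const_smul]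
      have hc2 : ‖kap⁻¹‖ₑ = ENNReal.ofReal kap⁻¹ := by
        rw [← ofReal_norm, Real.norm_eq_abs,
          abs_of_nonneg (inv_nonneg.2 hkap_pos.le)]
      rw [hc2]
      calc ENNReal.ofReal kap⁻¹ * eLpNorm (hfun (j+1) - hfun j) 2 (pmeas μ)
          ≤ ENNReal.ofReal kap⁻¹ *
            ((pmeas μ (pball c ((2:ℝ)^(j+1)*r) ∩ Xset E))^(-(1:ℝ)/2) +
             (pmeas μ (pball c ((2:ℝ)^(j+1)*r) ∩ Xset E))^(-(1:ℝ)/2)) := by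
            refine mul_le_mul_right ?_ _
            refine (eLpNorm_sub_le (hh_int (j+1)).aestronglyMeasurable
              (hh_int j).aestronglyMeasurable one_le_two).trans ?_
            rw [hh_two (j+1), hh_two j]
            exact add_le_add hmono2 le_rfl
        _ = ENNReal.ofReal kap⁻¹ *
            (2 * (pmeas μ (pball c ((2:ℝ)^(j+1)*r) ∩ Xset E))^(-(1:ℝ)/2)) := by
            rw [two_mul]
        _ ≤ ENNReal.ofReal kap⁻¹ * (2 * (ENNReal.ofReal (Real.sqrt 2) *
            (ENNReal.ofReal (Real.sqrt (4*C_D)) *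
              (pmeas μ (pball c ((2:ℝ)^(j+2)*r)))^(-(1:ℝ)/2)))) := by
            refine mul_le_mul_right (mul_le_mul_right ((hEQhalf j).trans ?_) _) _
            exact mul_le_mul_right (hQstep j) _
        _ = (ENNReal.ofReal kap⁻¹ * (ENNReal.ofReal 2 * (ENNReal.ofReal (Real.sqrt 2) *
            ENNReal.ofReal (Real.sqrt (4*C_D))))) *
            (pmeas μ (pball c ((2:ℝ)^(j+2)*r)))^(-(1:ℝ)/2) := by
            rw [show ((2:ℝ≥0∞)) = ENNReal.ofReal 2 by norm_num]
            ring
        _ = ENNReal.ofReal (kap⁻¹ * (2 * (Real.sqrt 2 * Real.sqrt (4*C_D)))) *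
            (pmeas μ (pball c ((2:ℝ)^(j+2)*r)))^(-(1:ℝ)/2) := by
            rw [← ENNReal.ofReal_mul (by positivity : (0:ℝ) ≤ Real.sqrt 2),
              ← ENNReal.ofReal_mul (by norm_num : (0:ℝ) ≤ 2),
              ← ENNReal.ofReal_mul (inv_nonneg.2 hkap_pos.le)]
        _ = (pmeas μ (pball c ((2:ℝ)^(j+2)*r)))^(-(1:ℝ)/2) := by
            have h1 : kap⁻¹ * (2 * (Real.sqrt 2 * Real.sqrt (4*C_D))) = 1 := by
              have h2 : 2 * (Real.sqrt 2 * Real.sqrt (4*C_D)) = kap := by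
                show 2 * (Real.sqrt 2 * Real.sqrt (4*C_D)) = 2 * Real.sqrt 2 * Real.sqrt (4*C_D)
                ring
              rw [h2]
              exact inv_mul_cancel₀ hkap_pos.ne'
            rw [h1, ENNReal.ofReal_one, one_mul]
  -- interleaved sequences
  set lam : ℕ → ℝ := fun i => if i % 2 = 0 then lamg (i/2 + 1) else kap * N (i/2 + 2)
    with hlamdef
  set A : ℕ → ℝ × E → ℝ := fun i => if i % 2 = 0
    then (fun p => (lamg (i/2+1))⁻¹ * g (i/2+1) p)
    else (fun p => kap⁻¹ * (hfun (i/2+2) p - hfun (i/2+1) p)) with hAdef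
  have hAtoms : ∀ i, IsAtom12 μ (A i) := by
    intro i
    by_cases h : i % 2 = 0
    · have hAi : A i = fun p => (lamg (i/2+1))⁻¹ * g (i/2+1) p := by
        simp only [hAdef]; rw [if_pos h]
      rw [hAi]
      exact hAtomG (i/2+1) (by omega)
    · have hAi : A i = fun p => kap⁻¹ * (hfun (i/2+1+1) p - hfun (i/2+1) p) := by
        simp only [hAdef]; rw [if_neg h]
      rw [hAi]
      exact hAtomB (i/2+1) (by omega)
  have hprod_even : ∀ k : ℕ, ∀ p, lam (2*k) * A (2*k) p = g (k+1) p := by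
    intro k p
    have h0 : (2*k) % 2 = 0 := by omega
    have h1 : (2*k) / 2 = k := by omega
    have hAi : A (2*k) = fun p => (lamg (k+1))⁻¹ * g (k+1) p := by
      simp only [hAdef]; rw [if_pos h0, h1]
    have hli : lam (2*k) = lamg (k+1) := by
      simp only [hlamdef]; rw [if_pos h0, h1]
    simp only [hAi, hli]
    rw [← mul_assoc, mul_inv_cancel₀ (hlamg_pos (k+1)).ne', one_mul]
  have hprod_odd : ∀ k : ℕ, ∀ p,
      lam (2*k+1) * A (2*k+1) p = N (k+2) * (hfun (k+2) p - hfun (k+1) p) := by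
    intro k p
    have h0 : ¬ (2*k+1) % 2 = 0 := by omega
    have h1 : (2*k+1) / 2 = k := by omega
    have hAi : A (2*k+1) = fun p => kap⁻¹ * (hfun (k+2) p - hfun (k+1) p) := by
      simp only [hAdef]; rw [if_neg h0, h1]
    have hli : lam (2*k+1) = kap * N (k+2) := by
      simp only [hlamdef]; rw [if_neg h0, h1]
    simp only [hAi, hli]
    have hx : kap * N (k+2) * (kap⁻¹ * (hfun (k+2) p - hfun (k+1) p))
        = (kap * kap⁻¹) * (N (k+2) * (hfun (k+2) p - hfun (k+1) p)) := by ring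
    rw [hx, mul_inv_cancel₀ hkap_pos.ne', one_mul]
  -- the partial sum identity
  have hsum : ∀ k : ℕ, ∀ p, (∑ i ∈ Finset.range (2*(k+1)), lam i * A i p) =
      (pball c ((2:ℝ)^(k+2)*r) ∩ Xset E).indicator m p + N (k+2) * hfun (k+2) p := by
    intro k
    induction k with
    | zero =>
        intro p
        rw [show 2*(0+1) = 0+1+1 from rfl, Finset.sum_range_succ, Finset.sum_range_succ,
          Finset.sum_range_zero]
        have e1 := hprod_even 0 p
        have e2 := hprod_odd 0 p
        norm_num at e1 e2
        rw [zero_add, e1, e2]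
        have hg1 : g 1 p = (molBall c r 1).indicator m p - I 1 * hfun 1 p := rfl
        rw [hg1, molBall_one]
        have hIN : I 1 = - N 2 := by
          have h1 := hNrec 1 le_rfl
          have h2 := hN1
          linarith
        rw [hIN]
        show (pball c (2^2*r) ∩ Xset E).indicator m p - (-N 2) * hfun 1 p
            + N 2 * (hfun 2 p - hfun 1 p)
            = (pball c ((2:ℝ)^(0+2)*r) ∩ Xset E).indicator m p + N (0+2) * hfun (0+2) p
        norm_num
        ring
    | succ n ih =>
        intro p
        rw [show 2*(n+1+1) = (2*(n+1))+1+1 by ring, Finset.sum_range_succ,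
          Finset.sum_range_succ, ih p]
        have e1 := hprod_even (n+1) p
        have e2 := hprod_odd (n+1) p
        rw [e1, e2]
        have hgv : g (n+1+1) p = (molBall c r (n+2)).indicator m p - I (n+2) * hfun (n+2) p := rfl
        have hdisj : Disjoint (pball c ((2:ℝ)^(n+2)*r) ∩ Xset E) (molBall c r (n+2)) :=
          ((molBall_disjoint_pball c hr (show 2 ≤ n+2 by omega)
            (le_refl (n+2))).mono_right inter_subset_left).symm
        have hunion : (pball c ((2:ℝ)^(n+2)*r) ∩ Xset E).indicator m p
            + (molBall c r (n+2)).indicator m p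
            = (pball c ((2:ℝ)^(n+3)*r) ∩ Xset E).indicator m p := by
          have hu := union_molBall_step c hr (show 1 ≤ n+1 by omega)
          have hi := indicator_union_of_disjoint hdisj m
          rw [show (2:ℝ)^(n+3) = (2:ℝ)^(n+1+2) by norm_num,
            ← hu, hi]
        have hN' : N (n+2) = I (n+2) + N (n+3) := by
          have := hNrec (n+2) (by omega)
          convert this using 3 <;> omega
        rw [hgv]
        have hgoal : (pball c ((2:ℝ)^(n+2)*r) ∩ Xset E).indicator m p + N (n+2) * hfun (n+2) p
            + ((molBall c r (n+2)).indicator m p - I (n+2) * hfun (n+2) p)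
            + N (n+1+2) * (hfun (n+1+2) p - hfun (n+1+1) p)
            = (pball c ((2:ℝ)^(n+1+2)*r) ∩ Xset E).indicator m p
              + N (n+1+2) * hfun (n+1+2) p := by
          rw [show (n+1+2) = (n+3) from rfl, show (n+1+1) = (n+2) from rfl]
          rw [show (2:ℝ)^(n+1+2) = (2:ℝ)^(n+3) by norm_num]
          have hrearr : (pball c ((2:ℝ)^(n+2)*r) ∩ Xset E).indicator m p + N (n+2) * hfun (n+2) p
              + ((molBall c r (n+2)).indicator m p - I (n+2) * hfun (n+2) p)
              + N (n+3) * (hfun (n+3) p - hfun (n+2) p)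
              = ((pball c ((2:ℝ)^(n+2)*r) ∩ Xset E).indicator m p
                + (molBall c r (n+2)).indicator m p)
                + (N (n+2) - I (n+2) - N (n+3)) * hfun (n+2) p
                + N (n+3) * hfun (n+3) p := by ring
          rw [hrearr, hunion, show N (n+2) - I (n+2) - N (n+3) = 0 by linarith [hN'],
            zero_mul, add_zero]
        exact hgoal
  -- L¹ bounds on the remainder
  have hXQmeas : ∀ k : ℕ, MeasurableSet (Xset E \ pball c ((2:ℝ)^k*r)) :=
    fun k => measurableSet_Xset.diff (hQmeas k)
  have hXQint : ∀ k : ℕ, Integrable ((Xset E \ pball c ((2:ℝ)^k*r)).indicator m) (pmeas μ) :=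
    fun k => (hmInt.mono_set diff_subset).integrable_indicator (hXQmeas k)
  have hdiffEven : ∀ k : ℕ,
      eLpNorm (fun p => (Xset E).indicator m p - ∑ i ∈ Finset.range (2*(k+1)), lam i * A i p)
        1 (pmeas μ) ≤ ENNReal.ofReal (2*(q^(k+2)*(1-q)⁻¹)) := by
    intro k
    have heq : (fun p => (Xset E).indicator m p - ∑ i ∈ Finset.range (2*(k+1)), lam i * A i p)
        = fun p => (Xset E \ pball c ((2:ℝ)^(k+2)*r)).indicator m p
          - N (k+2) * hfun (k+2) p := by
      funext p
      rw [hsum k p]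
      have h1 : Xset E \ (pball c ((2:ℝ)^(k+2)*r) ∩ Xset E)
          = Xset E \ pball c ((2:ℝ)^(k+2)*r) := diff_inter_self_eq_diff
      have h2 : (Xset E \ pball c ((2:ℝ)^(k+2)*r)).indicator m p
          = (Xset E).indicator m p - (pball c ((2:ℝ)^(k+2)*r) ∩ Xset E).indicator m p := by
        rw [← h1, Set.indicator_sdiff inter_subset_right m]
        rfl
      rw [h2]
      ring
    rw [heq]
    have h3 : eLpNorm (fun p => (Xset E \ pball c ((2:ℝ)^(k+2)*r)).indicator m p
        - N (k+2) * hfun (k+2) p) 1 (pmeas μ) ≤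
        eLpNorm ((Xset E \ pball c ((2:ℝ)^(k+2)*r)).indicator m) 1 (pmeas μ) +
        eLpNorm (fun p => N (k+2) * hfun (k+2) p) 1 (pmeas μ) :=
      eLpNorm_sub_le (hXQint (k+2)).aestronglyMeasurable
        ((hh_int (k+2)).const_mul (N (k+2))).aestronglyMeasurable le_rfl
    refine h3.trans ?_
    have h4 : eLpNorm ((Xset E \ pball c ((2:ℝ)^(k+2)*r)).indicator m) 1 (pmeas μ) ≤
        ENNReal.ofReal (q^(k+2)*(1-q)⁻¹) := by
      rw [eLpNorm_indicator_eq_eLpNorm_restrict (hXQmeas (k+2)),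
        eLpNorm_one_eq_lintegral_enorm]
      exact htail (k+1) (by omega)
    have h5 : eLpNorm (fun p => N (k+2) * hfun (k+2) p) 1 (pmeas μ) ≤
        ENNReal.ofReal (q^(k+2)*(1-q)⁻¹) := by
      rw [hh_scaled_one (N (k+2)) (k+2)]
      exact ENNReal.ofReal_le_ofReal (hNabs (k+2) (by omega))
    refine (add_le_add h4 h5).trans (le_of_eq ?_)
    rw [← ENNReal.ofReal_add (by positivity) (by positivity)]
    congr 1
    ring
  have hdiffOdd : ∀ k : ℕ,
      eLpNorm (fun p => (Xset E).indicator m p -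
        ∑ i ∈ Finset.range (2*(k+1)+1), lam i * A i p) 1 (pmeas μ)
      ≤ ENNReal.ofReal (2*(q^(k+2)*(1-q)⁻¹)) + ENNReal.ofReal (2*q^(k+2)) := by
    intro k
    have heq : (fun p => (Xset E).indicator m p -
        ∑ i ∈ Finset.range (2*(k+1)+1), lam i * A i p)
        = fun p => ((Xset E).indicator m p -
          ∑ i ∈ Finset.range (2*(k+1)), lam i * A i p) - g (k+1+1) p := by
      funext p
      rw [Finset.sum_range_succ, hprod_even (k+1) p]
      ring
    rw [heq]
    have h3 := eLpNorm_sub_le (μ := pmeas μ) (p := 1)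
      (f := fun p => (Xset E).indicator m p - ∑ i ∈ Finset.range (2*(k+1)), lam i * A i p)
      (g := g (k+1+1))
      (((hmInt.integrable_indicator measurableSet_Xset).sub (by
        refine integrable_finset_sum _ (fun i _ => ?_)
        obtain ⟨c', r', -, -, hint', -, -⟩ := hAtoms i
        exact hint'.const_mul _)).aestronglyMeasurable)
      (hg_int (k+1+1)).aestronglyMeasurable le_rfl
    refine h3.trans ?_
    exact add_le_add (hdiffEven k) ((hg_eLp1 (k+1+1) (by omega)).trans
      (le_of_eq (by norm_num)))
  have hbound : ∀ n : ℕ, 2 ≤ n →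
      eLpNorm (fun p => (Xset E).indicator m p - ∑ i ∈ Finset.range n, lam i * A i p)
        1 (pmeas μ) ≤ ENNReal.ofReal ((4*(1-q)⁻¹) * q^(n/2)) := by
    intro n hn
    have hqpow_le : ∀ a b : ℕ, a ≤ b → q^b ≤ q^a :=
      fun a b hab => pow_le_pow_of_le_one hq0.le hq1.le hab
    rcases Nat.even_or_odd n with ⟨l, hl⟩ | ⟨l, hl⟩
    · have hl1 : 1 ≤ l := by omega
      have hn' : n = 2*((l-1)+1) := by omega
      have hdiv : n/2 = l := by omega
      rw [hdiv, hn']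
      refine (hdiffEven (l-1)).trans (ENNReal.ofReal_le_ofReal ?_)
      have h1 : q^(l-1+2) ≤ q^l := hqpow_le l (l-1+2) (by omega)
      have h2 : (0:ℝ) ≤ q^(l-1+2) := by positivity
      have h3 : (0:ℝ) < (1-q)⁻¹ := inv_pos.2 h1q
      nlinarith [pow_nonneg hq0.le l]
    · have hl1 : 1 ≤ l := by omega
      have hn' : n = 2*((l-1)+1)+1 := by omega
      have hdiv : n/2 = l := by omega
      rw [hdiv, hn']
      refine (hdiffOdd (l-1)).trans ?_
      rw [← ENNReal.ofReal_add (by positivity) (by positivity)]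
      refine ENNReal.ofReal_le_ofReal ?_
      have h1 : q^(l-1+2) ≤ q^l := hqpow_le l (l-1+2) (by omega)
      have h2 : (0:ℝ) ≤ q^(l-1+2) := by positivity
      have h3 : (0:ℝ) < (1-q)⁻¹ := inv_pos.2 h1q
      nlinarith [pow_nonneg hq0.le l, mul_le_mul_of_nonneg_left h1 h3.le]
  have hconv : Tendsto (fun n => eLpNorm (fun p => (Xset E).indicator m p -
      ∑ i ∈ Finset.range n, lam i * A i p) 1 (pmeas μ)) atTop (nhds 0) := by
    have hdiv2 : Tendsto (fun n : ℕ => n/2) atTop atTop :=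
      tendsto_atTop_atTop.2 (fun b => ⟨2*b, fun n hn => by omega⟩)
    have hq' : Tendsto (fun n : ℕ => (4*(1-q)⁻¹) * q^n) atTop (nhds 0) := by
      have h := tendsto_pow_atTop_nhds_zero_of_lt_one hq0.le hq1
      simpa using h.const_mul (4*(1-q)⁻¹)
    have hvt : Tendsto (fun n : ℕ => ENNReal.ofReal ((4*(1-q)⁻¹) * q^(n/2)))
        atTop (nhds 0) := by
      have h2 := hq'.comp hdiv2
      have h3 := ENNReal.tendsto_ofReal (a := 0) h2
      simpa using h3
    refine tendsto_of_tendsto_of_tendsto_of_le_of_le' tendsto_const_nhds hvt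
      (Eventually.of_forall (fun n => zero_le)) (eventually_atTop.2 ⟨2, hbound⟩)
  -- summability of the coefficients
  have hlam_bound : ∀ i : ℕ, |lam i| ≤ K * (Real.sqrt q)^i := by
    intro i
    have hstep : q^(i/2+1) ≤ (Real.sqrt q)^i := by
      have h1 : (Real.sqrt q)^(2*(i/2+1)) = q^(i/2+1) := by
        rw [pow_mul, Real.sq_sqrt hq0.le]
      rw [← h1]
      exact pow_le_pow_of_le_one hsq0 hsq1.le (by omega)
    have hsqrt2 : Real.sqrt 2 ≤ 2 := by
      nlinarith [Real.sq_sqrt (show (0:ℝ) ≤ 2 by norm_num), Real.sqrt_nonneg 2]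
    by_cases h : i % 2 = 0
    · have hli : lam i = lamg (i/2+1) := by simp only [hlamdef]; rw [if_pos h]
      have hlv : lamg (i/2+1) = 2*Real.sqrt 2*q^(i/2+1) := rfl
      rw [hli, hlv, abs_of_nonneg (by positivity)]
      have hb1 : 2*Real.sqrt 2*q^(i/2+1) ≤ 8*q^(i/2+1) := by
        have := pow_nonneg hq0.le (i/2+1)
        nlinarith
      refine hb1.trans ?_
      exact mul_le_mul hK8 hstep (by positivity) (by linarith)
    · have hli : lam i = kap * N (i/2+2) := by simp only [hlamdef]; rw [if_neg h]
      have hs4 : Real.sqrt (4*C_D) = 2*Real.sqrt C_D := by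
        rw [show (4:ℝ)*C_D = 2^2*C_D by norm_num, Real.sqrt_mul (by positivity) C_D,
          Real.sqrt_sq (by norm_num : (0:ℝ) ≤ 2)]
      have hkapb : kap ≤ 8*Real.sqrt C_D := by
        rw [hkapdef, hs4]
        nlinarith
      rw [hli, abs_mul, abs_of_nonneg hkap_pos.le]
      have hb1 : |N (i/2+2)| ≤ q^(i/2+2)*(1-q)⁻¹ := hNabs (i/2+2) (by omega)
      have hb2 : q^(i/2+2) ≤ q^(i/2+1) :=
        pow_le_pow_of_le_one hq0.le hq1.le (by omega)
      have h3 : (0:ℝ) < (1-q)⁻¹ := inv_pos.2 h1q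
      calc kap * |N (i/2+2)| ≤ (8*Real.sqrt C_D) * (q^(i/2+1)*(1-q)⁻¹) := by
            have hq2 : (0:ℝ) ≤ q^(i/2+2)*(1-q)⁻¹ := by positivity
            have hmono : |N (i/2+2)| ≤ q^(i/2+1)*(1-q)⁻¹ :=
              hb1.trans (by nlinarith)
            exact mul_le_mul hkapb hmono (abs_nonneg _) (by positivity)
        _ = (8*Real.sqrt C_D*(1-q)⁻¹) * q^(i/2+1) := by ring
        _ ≤ K * (Real.sqrt q)^i := by
            refine mul_le_mul ?_ hstep (by positivity) hKpos.le
            rw [hKdef]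
            nlinarith
  have hsummable : Summable (fun i => |lam i|) :=
    Summable.of_nonneg_of_le (fun i => abs_nonneg _) hlam_bound
      ((summable_geometric_of_lt_one hsq0 hsq1).mul_left K)
  have htsumle : (∑' i, |lam i|) ≤ K * (1 - Real.sqrt q)⁻¹ := by
    calc (∑' i, |lam i|) ≤ ∑' i, K * (Real.sqrt q)^i :=
        Summable.tsum_le_tsum hlam_bound hsummable
          ((summable_geometric_of_lt_one hsq0 hsq1).mul_left K)
      _ = K * (1 - Real.sqrt q)⁻¹ := by
          rw [tsum_mul_left, tsum_geometric_of_lt_one hsq0 hsq1]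
  -- conclusion
  have hHasDecomp : HasL1Decomp (pmeas μ) ((Xset E).indicator m) lam A :=
    ⟨hsummable, hconv⟩
  have hFint : Integrable ((Xset E).indicator m) (pmeas μ) :=
    hmInt.integrable_indicator measurableSet_Xset
  have hMem : MemH1 μ ((Xset E).indicator m) := ⟨hFint, lam, A, hAtoms, hHasDecomp⟩
  refine ⟨⟨hmInt, hMem⟩, ?_⟩
  rw [H1znorm, H1norm]
  have hmemS : (∑' i, |lam i|) ∈ {c' | ∃ (lam' : ℕ → ℝ) (a' : ℕ → ℝ × E → ℝ),
      (∀ i, IsAtom12 μ (a' i)) ∧ HasL1Decomp (pmeas μ) ((Xset E).indicator m) lam' a' ∧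
      c' = ∑' i, |lam' i|} := ⟨lam, A, hAtoms, hHasDecomp, rfl⟩
  have hbdd : BddBelow {c' | ∃ (lam' : ℕ → ℝ) (a' : ℕ → ℝ × E → ℝ),
      (∀ i, IsAtom12 μ (a' i)) ∧ HasL1Decomp (pmeas μ) ((Xset E).indicator m) lam' a' ∧
      c' = ∑' i, |lam' i|} := by
    refine ⟨0, ?_⟩
    rintro x ⟨lam', a', -, -, rfl⟩
    exact tsum_nonneg (fun i => abs_nonneg _)
  exact (csInf_le hbdd hmemS).trans (by linarith)
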